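/- Two abelian groups that are elementarily equivalent have equal Szmielew invariants for each prime p and each n: the dimensions (as min with ω) of p^n G[p] / p^{n+1} G[p] over 𝔽_p agree. -/

import Mathlib

open FirstOrder FirstOrder.Language

/-- The first-order language `{+, -, 0}` of abelian groups. -/
def abLang : Language where
  Functions
    | 0 => Unit   -- the constant 0
    | 1 => Unit   -- negation
    | 2 => Unit   -- addition
    | _ + 3 => Empty
  Relations := fun _ => Empty

/-- The natural `abLang`-structure on an abelian group. -/
def abStructure (G : Type) [AddCommGroup G] : abLang.Structure G where
  funMap {n} f x :=
    match n, f with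
    | 0, _ => 0
    | 1, _ => -(x 0)
    | 2, _ => x 0 + x 1
  RelMap {n} r _ := r.elim

/-- The subgroup `pⁿG[p] = pⁿG ∩ G[p]` of elements of the form `pⁿ • x` that are
annihilated by `p`. -/
def szmielewSubgroup (G : Type) [AddCommGroup G] (p n : ℕ) : AddSubgroup G where
  carrier := {g | (∃ x : G, p ^ n • x = g) ∧ p • g = 0}
  zero_mem' := ⟨⟨0, smul_zero _⟩, smul_zero _⟩
  add_mem' := fun {a b} ha hb =>
    ⟨⟨ha.1.choose + hb.1.choose, by rw [smul_add, ha.1.choose_spec, hb.1.choose_spec]⟩,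
      by rw [smul_add, ha.2, hb.2, add_zero]⟩
  neg_mem' := fun {a} ha =>
    ⟨⟨-ha.1.choose, by rw [smul_neg, ha.1.choose_spec]⟩, by rw [smul_neg, ha.2, neg_zero]⟩

/-- The quotient `pⁿG[p] / pⁿ⁺¹G[p]`. -/
abbrev szmielewQuotient (G : Type) [AddCommGroup G] (p n : ℕ) : Type :=
  szmielewSubgroup G p n ⧸
    (szmielewSubgroup G p (n + 1)).addSubgroupOf (szmielewSubgroup G p n)

/-- The quotient `pⁿG[p] / pⁿ⁺¹G[p]` is a vector space over `𝔽_p = ZMod p`. -/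
noncomputable instance szmielewModule (G : Type) [AddCommGroup G] (p n : ℕ) :
    Module (ZMod p) (szmielewQuotient G p n) :=
  QuotientAddGroup.zmodModule (by
    intro x
    have hx : p • x = 0 := Subtype.ext (by simpa using x.2.2)
    rw [hx]
    exact zero_mem _)

/-- The Szmielew invariant `U(p, n, G) = min(ω, dim_{𝔽_p} (pⁿG[p] / pⁿ⁺¹G[p]))`. -/
noncomputable def szmielewInvariant (G : Type) [AddCommGroup G] (p n : ℕ) : Cardinal :=
  min Cardinal.aleph0 (Module.rank (ZMod p) (szmielewQuotient G p n))

attribute [local instance] abStructure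

section Terms
variable {α : Type*}

def abZeroF : abLang.Functions 0 := ()
def abAddF : abLang.Functions 2 := ()

def zeroT : abLang.Term α := Term.func abZeroF ![]
def addT (t s : abLang.Term α) : abLang.Term α := Term.func abAddF ![t, s]

def nsmulT : ℕ → abLang.Term α → abLang.Term α
  | 0, _ => zeroT
  | m + 1, t => addT t (nsmulT m t)

variable {G : Type} [AddCommGroup G]

@[simp] lemma realize_zeroT (v : α → G) : (zeroT : abLang.Term α).realize v = 0 := rfl

@[simp] lemma realize_addT (t s : abLang.Term α) (v : α → G) :
    (addT t s).realize v = t.realize v + s.realize v := rfl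

@[simp] lemma realize_nsmulT (m : ℕ) (t : abLang.Term α) (v : α → G) :
    (nsmulT m t).realize v = m • t.realize v := by
  induction m with
  | zero => simp [nsmulT]
  | succ m ih => simp [nsmulT, ih, succ_nsmul, add_comm]

def sumListT : List (abLang.Term α) → abLang.Term α
  | [] => zeroT
  | t :: l => addT t (sumListT l)

@[simp] lemma realize_sumListT (l : List (abLang.Term α)) (v : α → G) :
    (sumListT l).realize v = (l.map (fun t => t.realize v)).sum := by
  induction l with
  | nil => simp [sumListT]
  | cons t l ih => simp [sumListT, ih]

end Terms

section Formulas
variable {α : Type*}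

def conjListF : List (abLang.Formula α) → abLang.Formula α
  | [] => ⊤
  | φ :: l => φ ⊓ conjListF l

variable {G : Type} [AddCommGroup G]

@[simp] lemma realize_conjListF (l : List (abLang.Formula α)) (v : α → G) :
    (conjListF l).Realize v ↔ ∀ φ ∈ l, φ.Realize v := by
  induction l with
  | nil => simp [conjListF]
  | cons φ l ih => simp [conjListF, Formula.realize_inf, ih]

end Formulas

section Sentence

abbrev szVars (k : ℕ) : Type := (Fin k ⊕ Fin k) ⊕ Unit

def aVar {k : ℕ} (i : Fin k) : abLang.Term (szVars k) := Term.var (Sum.inl (Sum.inl i))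
def xVar {k : ℕ} (i : Fin k) : abLang.Term (szVars k) := Term.var (Sum.inl (Sum.inr i))
def yVar {k : ℕ} : abLang.Term (szVars k) := Term.var (Sum.inr ())

variable (p n k : ℕ) [NeZero p]

/-- term `∑ i, (c i).val • aᵢ` -/
def combT (c : Fin k → ZMod p) : abLang.Term (szVars k) :=
  sumListT ((List.finRange k).map fun i => nsmulT (c i).val (aVar i))

noncomputable def szCore : abLang.Formula (szVars k) :=
  conjListF ((List.finRange k).map fun i =>
    (Term.equal (nsmulT (p ^ n) (xVar i)) (aVar i)) ⊓
      (Term.equal (nsmulT p (aVar i)) zeroT)) ⊓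
  conjListF ((Finset.univ : Finset (Fin k → ZMod p)).toList.map fun c =>
    if c = 0 then ⊤ else (Term.equal (nsmulT (p ^ (n + 1)) yVar) (combT p k c)).not)

noncomputable def szSentence : abLang.Sentence :=
  Formula.iExs (Fin k ⊕ Fin k) (Formula.relabel Sum.inr (Formula.iAlls Unit (szCore p n k)))

variable {G : Type} [AddCommGroup G]

lemma realize_combT (c : Fin k → ZMod p) (v : szVars k → G) :
    (combT p k c).realize v = ∑ i : Fin k, (c i).val • v (Sum.inl (Sum.inl i)) := by
  simp [combT, List.map_map, Fin.sum_univ_def, aVar, Function.comp_def]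

lemma realize_szCore (v : szVars k → G) :
    (szCore p n k).Realize v ↔
      ((∀ i : Fin k, p ^ n • v (Sum.inl (Sum.inr i)) = v (Sum.inl (Sum.inl i)) ∧
          p • v (Sum.inl (Sum.inl i)) = 0) ∧
        ∀ c : Fin k → ZMod p, c ≠ 0 →
          ¬ p ^ (n + 1) • v (Sum.inr ()) = ∑ i : Fin k, (c i).val • v (Sum.inl (Sum.inl i))) := by
  rw [szCore, Formula.realize_inf]
  apply and_congr
  · rw [realize_conjListF]
    simp [Formula.realize_inf, Formula.realize_equal, aVar, xVar]
  · rw [realize_conjListF]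
    simp only [List.mem_map, Finset.mem_toList, Finset.mem_univ, true_and]
    constructor
    · intro hl c hc
      have := hl _ ⟨c, rfl⟩
      rw [if_neg hc] at this
      simpa [Formula.realize_not, Formula.realize_equal, realize_combT, yVar] using this
    · rintro hr φ ⟨c, rfl⟩
      by_cases hc : c = 0
      · simp [hc]
      · rw [if_neg hc]
        simpa [Formula.realize_not, Formula.realize_equal, realize_combT, yVar] using hr c hc

lemma mem_szmielewSubgroup {m : ℕ} {g : G} :
    g ∈ szmielewSubgroup G p m ↔ (∃ x : G, p ^ m • x = g) ∧ p • g = 0 := Iff.rfl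

lemma realize_szSentence :
    G ⊨ szSentence p n k ↔
      ∃ a : Fin k → G, (∀ i, a i ∈ szmielewSubgroup G p n) ∧
        ∀ c : Fin k → ZMod p, c ≠ 0 →
          (∑ i : Fin k, (c i).val • a i) ∉ szmielewSubgroup G p (n + 1) := by
  rw [Sentence.Realize, szSentence, Formula.realize_iExs]
  constructor
  · rintro ⟨w, hw⟩
    simp only [Formula.realize_relabel, Sum.elim_comp_inr] at hw
    rw [Formula.realize_iAlls] at hw
    refine ⟨fun i => w (Sum.inl i), fun i => ?_, fun c hc hmem => ?_⟩
    · have h1 := ((realize_szCore p n k _).mp (hw (fun _ => 0))).1 i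
      exact ⟨⟨w (Sum.inr i), by simpa using h1.1⟩, by simpa using h1.2⟩
    · obtain ⟨⟨y, hy⟩, -⟩ := hmem
      have h2 := ((realize_szCore p n k _).mp (hw (fun _ => y))).2 c hc
      exact h2 (by simpa using hy)
  · rintro ⟨a, ha, hna⟩
    refine ⟨Sum.elim a (fun i => (ha i).1.choose), ?_⟩
    have key : (Formula.iAlls (L := abLang) Unit (szCore p n k)).Realize
        (Sum.elim a fun i => (ha i).1.choose) := by
      rw [Formula.realize_iAlls]
      intro u
      rw [realize_szCore]
      constructor
      · exact fun i => ⟨by simpa using (ha i).1.choose_spec, by simpa using (ha i).2⟩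
      · intro c hc heq
        refine hna c hc ⟨⟨u (), by simpa using heq⟩, ?_⟩
        rw [Finset.smul_sum]
        exact Finset.sum_eq_zero fun i _ => by rw [smul_comm, (ha i).2, smul_zero]
    rw [Formula.realize_relabel, Sum.elim_comp_inr]
    exact key

end Sentence

section Bridge

variable {G : Type} [AddCommGroup G] (p n k : ℕ) [NeZero p]

lemma sum_smul_mk (b : Fin k → szmielewSubgroup G p n) (c : Fin k → ZMod p) :
    ∑ i : Fin k, c i • (QuotientAddGroup.mk' _ (b i) : szmielewQuotient G p n) =
      QuotientAddGroup.mk'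
        ((szmielewSubgroup G p (n + 1)).addSubgroupOf (szmielewSubgroup G p n))
        (∑ i : Fin k, (c i).val • b i) := by
  rw [map_sum]
  refine Finset.sum_congr rfl fun i _ => ?_
  rw [map_nsmul, ← Nat.cast_smul_eq_nsmul (ZMod p), ZMod.natCast_val, ZMod.cast_id]

lemma coe_sum_smul (b : Fin k → szmielewSubgroup G p n) (c : Fin k → ZMod p) :
    ((∑ i : Fin k, (c i).val • b i : szmielewSubgroup G p n) : G) =
      ∑ i : Fin k, (c i).val • (b i : G) := by
  push_cast
  rfl

lemma rank_iff (hp : p.Prime) :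
    (k : Cardinal) ≤ Module.rank (ZMod p) (szmielewQuotient G p n) ↔
      ∃ a : Fin k → G, (∀ i, a i ∈ szmielewSubgroup G p n) ∧
        ∀ c : Fin k → ZMod p, c ≠ 0 →
          (∑ i : Fin k, (c i).val • a i) ∉ szmielewSubgroup G p (n + 1) := by
  haveI : Fact p.Prime := ⟨hp⟩
  rw [natCast_le_rank_iff]
  constructor
  · rintro ⟨v, hv⟩
    choose b hb using fun i => QuotientAddGroup.mk'_surjective
      ((szmielewSubgroup G p (n + 1)).addSubgroupOf (szmielewSubgroup G p n)) (v i)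
    refine ⟨fun i => (b i : G), fun i => (b i).2, fun c hc hmem => ?_⟩
    have hz : ∑ i : Fin k, c i • v i = 0 := by
      have h1 : ∑ i : Fin k, c i • v i =
          QuotientAddGroup.mk' _ (∑ i : Fin k, (c i).val • b i) := by
        rw [← sum_smul_mk]
        exact Finset.sum_congr rfl fun i _ => by rw [hb]
      rw [h1, QuotientAddGroup.mk'_apply, QuotientAddGroup.eq_zero_iff,
        AddSubgroup.mem_addSubgroupOf, coe_sum_smul]
      exact hmem
    have := Fintype.linearIndependent_iff.mp hv c hz
    exact hc (funext this)
  · rintro ⟨a, ha, hna⟩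
    refine ⟨fun i => QuotientAddGroup.mk' _ (⟨a i, ha i⟩ : szmielewSubgroup G p n), ?_⟩
    rw [Fintype.linearIndependent_iff]
    intro g hg
    by_contra h0
    push_neg at h0
    obtain ⟨j, hj⟩ := h0
    have hgne : g ≠ 0 := fun he => hj (by rw [he]; rfl)
    refine hna g hgne ?_
    rw [sum_smul_mk, QuotientAddGroup.mk'_apply, QuotientAddGroup.eq_zero_iff,
      AddSubgroup.mem_addSubgroupOf, coe_sum_smul] at hg
    exact hg

end Bridge

lemma min_aleph0_congr {a b : Cardinal} (h : ∀ k : ℕ, ((k : Cardinal) ≤ a ↔ (k : Cardinal) ≤ b)) :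
    min Cardinal.aleph0 a = min Cardinal.aleph0 b := by
  rcases lt_or_ge a Cardinal.aleph0 with ha | ha
  · obtain ⟨m, rfl⟩ := Cardinal.lt_aleph0.mp ha
    have hb1 : (m : Cardinal) ≤ b := (h m).mp le_rfl
    have hb2 : b < Cardinal.aleph0 := by
      by_contra hb
      push_neg at hb
      have := (h (m + 1)).mpr ((Cardinal.nat_lt_aleph0 (m + 1)).le.trans hb)
      rw [Nat.cast_le] at this
      omega
    obtain ⟨l, rfl⟩ := Cardinal.lt_aleph0.mp hb2
    have hb3 : l ≤ m := by
      by_contra hl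
      push_neg at hl
      have := (h (m + 1)).mpr (by exact_mod_cast Nat.succ_le_of_lt hl)
      rw [Nat.cast_le] at this
      omega
    have hml : m ≤ l := by exact_mod_cast hb1
    rw [le_antisymm hb3 hml]
  · have hb : Cardinal.aleph0 ≤ b := by
      rw [Cardinal.aleph0_le]
      exact fun k => (h k).mp ((Cardinal.nat_lt_aleph0 k).le.trans ha)
    rw [min_eq_left ha, min_eq_left hb]


/-- Elementarily equivalent abelian groups have equal Szmielew invariants: for each prime
`p` and each `n`, the truncated dimensions of `pⁿG[p]/pⁿ⁺¹G[p]` over `𝔽_p` agree. -/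
theorem szmielewInvariant_eq_of_elementarilyEquivalent (G H : Type)
    [AddCommGroup G] [AddCommGroup H]
    (h : ∀ φ : abLang.Sentence,
      (letI := abStructure G; G ⊨ φ) ↔ (letI := abStructure H; H ⊨ φ))
    (p : ℕ) (hp : p.Prime) (n : ℕ) :
    szmielewInvariant G p n = szmielewInvariant H p n := by
  haveI : NeZero p := ⟨hp.ne_zero⟩
  apply min_aleph0_congr
  intro k
  rw [rank_iff p n k hp, rank_iff p n k hp,
    ← realize_szSentence p n k, ← realize_szSentence p n k]
  exact h (szSentence p n k)
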